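/- There exist a countable submetrizable T1 regular space X and a continuous surjection f : X → S_ω onto the sequential fan such that f is compact (all fibers are compact), sequence-covering, but not 1-sequence-covering. -/

import Mathlib

open Filter Topology

/-- `L g = ⋃ n {⟨n,k⟩ : k ≥ g n}`. -/
def L (g : ℕ → ℕ) : Set (ℕ × ℕ) := {x | g x.1 ≤ x.2}

/-- The sequential fan `S_ω` as `{0} ∪ (ℕ × ℕ)` (with `none` playing the role of `0`). -/
def fanTopology : TopologicalSpace (Option (ℕ × ℕ)) :=
  TopologicalSpace.generateFrom
    ({s | ∃ a : ℕ × ℕ, s = {some a}} ∪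
     {s | ∃ g : ℕ → ℕ, s = insert none (Option.some '' L g)})

/-- `p` is a nontrivial sequence converging to `y`. -/
def NontrivialConvTo {Y : Type*} [TopologicalSpace Y] (p : ℕ → Y) (y : Y) : Prop :=
  Tendsto p atTop (𝓝 y) ∧ ¬ ∃ N, ∀ n ≥ N, p n = p N

namespace FanEx

/-- The underlying set of our space: `Sum.inl (c,k,some j)` are isolated points (layer `j`
over the fan point `(c,k)`), `Sum.inl (c,k,none)` compactifies the fiber over `(c,k)`,
`Sum.inr (some j)` = `u_j`, `Sum.inr none` = `u_∞`. -/
abbrev XX : Type := (ℕ × ℕ × Option ℕ) ⊕ Option ℕ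

def pt (c k j : ℕ) : XX := Sum.inl (c, k, some j)
def fpt (c k : ℕ) : XX := Sum.inl (c, k, none)
def upt (j : ℕ) : XX := Sum.inr (some j)
def uinf : XX := Sum.inr none

/-- Neighborhood filter of `u_j`. -/
def nnj (j : ℕ) : Filter XX :=
  pure (upt j) ⊔ ⨆ c ∈ Finset.range (j + 1), Filter.map (fun k => pt c k j) atTop

/-- Neighborhood filters. -/
def nn : XX → Filter XX
  | Sum.inl (c, k, some j) => pure (Sum.inl (c, k, some j))
  | Sum.inl (c, k, none) => pure (fpt c k) ⊔ Filter.map (fun j => pt c k j) atTop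
  | Sum.inr (some j) => nnj j
  | Sum.inr none => pure uinf ⊔ atTop.bind nnj

lemma nn_pt (c k j : ℕ) : nn (pt c k j) = pure (pt c k j) := rfl
lemma nn_fpt (c k : ℕ) : nn (fpt c k) = pure (fpt c k) ⊔ Filter.map (fun j => pt c k j) atTop := rfl
lemma nn_upt (j : ℕ) : nn (upt j) = nnj j := rfl
lemma nn_uinf : nn uinf = pure uinf ⊔ atTop.bind nnj := rfl

lemma mem_nnj {A : Set XX} {j : ℕ} :
    A ∈ nnj j ↔ upt j ∈ A ∧ ∀ c ≤ j, ∀ᶠ k in atTop, pt c k j ∈ A := by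
  simp only [nnj, Filter.mem_sup, Filter.mem_pure, Filter.mem_iSup, Filter.mem_map]
  constructor
  · rintro ⟨h1, h2⟩
    exact ⟨h1, fun c hc => h2 c (Finset.mem_range.2 (Nat.lt_succ_of_le hc))⟩
  · rintro ⟨h1, h2⟩
    exact ⟨h1, fun c hc => h2 c (Nat.lt_succ_iff.1 (Finset.mem_range.1 hc))⟩

lemma mem_nn_fpt {A : Set XX} {c k : ℕ} :
    A ∈ nn (fpt c k) ↔ fpt c k ∈ A ∧ ∀ᶠ j in atTop, pt c k j ∈ A := by
  simp only [nn_fpt, Filter.mem_sup, Filter.mem_pure, Filter.mem_map]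
  rfl

lemma mem_nn_uinf {A : Set XX} :
    A ∈ nn uinf ↔ uinf ∈ A ∧ ∀ᶠ j in atTop, A ∈ nnj j := by
  simp only [nn_uinf, Filter.mem_sup, Filter.mem_pure, Filter.mem_bind']
  rfl

/-- Our topology. -/
def tXX : TopologicalSpace XX := TopologicalSpace.mkOfNhds nn

lemma pure_le_nn : (pure : XX → Filter XX) ≤ nn := by
  intro x
  rcases x with ⟨c, k, (_ | j)⟩ | (_ | j)
  · exact le_sup_left
  · exact le_rfl
  · exact le_sup_left
  · exact le_sup_left

lemma nnj_of_mem {s : Set XX} {j : ℕ} (hs : s ∈ nnj j) : {y | s ∈ nn y} ∈ nnj j := by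
  rw [mem_nnj] at hs ⊢
  refine ⟨by simpa only [Set.mem_setOf_eq, nn_upt] using mem_nnj.2 hs, fun c hc => ?_⟩
  filter_upwards [hs.2 c hc] with m hm
  simpa only [Set.mem_setOf_eq, nn_pt, Filter.mem_pure] using hm

lemma nn_h1 : ∀ a : XX, ∀ s ∈ nn a, ∀ᶠ y in nn a, s ∈ nn y := by
  intro a s hs
  rcases a with ⟨c, k, (_ | j)⟩ | (_ | j)
  · -- fpt c k
    replace hs := mem_nn_fpt.1 hs
    show {y | s ∈ nn y} ∈ nn (fpt c k)
    rw [mem_nn_fpt]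
    refine ⟨by simpa only [Set.mem_setOf_eq] using (mem_nn_fpt.2 hs), ?_⟩
    filter_upwards [hs.2] with j hj
    simpa only [Set.mem_setOf_eq, nn_pt, Filter.mem_pure] using hj
  · -- isolated
    exact hs
  · -- uinf
    replace hs := mem_nn_uinf.1 hs
    show {y | s ∈ nn y} ∈ nn uinf
    rw [mem_nn_uinf]
    refine ⟨by simpa only [Set.mem_setOf_eq] using (mem_nn_uinf.2 hs), ?_⟩
    filter_upwards [hs.2] with j hj
    exact nnj_of_mem hj
  · -- upt j
    show {y | s ∈ nn y} ∈ nn (upt j)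
    rw [nn_upt]
    exact nnj_of_mem hs

lemma nhds_eq (x : XX) : @nhds XX tXX x = nn x :=
  TopologicalSpace.nhds_mkOfNhds nn x pure_le_nn nn_h1


lemma isOpen_tXX {s : Set XX} : IsOpen[tXX] s ↔ ∀ a ∈ s, s ∈ nn a := by
  rw [@isOpen_iff_mem_nhds XX tXX s]
  exact forall₂_congr (fun a _ => by rw [nhds_eq])

lemma isClosed_tXX {s : Set XX} (h : ∀ b ∉ s, sᶜ ∈ nn b) : IsClosed[tXX] s := by
  rw [← @isOpen_compl_iff XX s tXX, isOpen_tXX]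
  exact fun b hb => h b hb

lemma eventually_ne_pt (a : XX) (c k : ℕ) : ∀ᶠ j in atTop, pt c k j ≠ a := by
  rcases a with ⟨c', k', (_ | j')⟩ | o
  · exact Eventually.of_forall (fun j => by simp [pt, fpt])
  · filter_upwards [eventually_ne_atTop j'] with j hj
    simp only [pt, Sum.inl.injEq, Prod.mk.injEq, Option.some.injEq, ne_eq, not_and]
    exact fun _ _ => hj
  · exact Eventually.of_forall (fun j => by simp [pt])

lemma eventually_ne_pt_k (a : XX) (c j : ℕ) : ∀ᶠ k in atTop, pt c k j ≠ a := by
  rcases a with ⟨c', k', (_ | j')⟩ | o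
  · exact Eventually.of_forall (fun k => by simp [pt, fpt])
  · filter_upwards [eventually_ne_atTop k'] with k hk
    simp only [pt, Sum.inl.injEq, Prod.mk.injEq, Option.some.injEq, ne_eq, not_and]
    exact fun _ h => absurd h hk
  · exact Eventually.of_forall (fun k => by simp [pt])

lemma isClosed_singleton (a : XX) : IsClosed[tXX] {a} := by
  refine isClosed_tXX (fun b hb => ?_)
  have hba : b ≠ a := hb
  rcases b with ⟨c, k, (_ | j)⟩ | (_ | j)
  · -- fpt
    refine mem_nn_fpt.2 ⟨hba, ?_⟩
    filter_upwards [eventually_ne_pt a c k] with j hj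
    exact hj
  · exact hba
  · -- uinf
    refine mem_nn_uinf.2 ⟨hba, ?_⟩
    rcases a with ⟨c', k', o'⟩ | (_ | j')
    · refine Eventually.of_forall (fun j => mem_nnj.2 ⟨by simp [upt], fun c hc => ?_⟩)
      filter_upwards [eventually_ne_pt_k (Sum.inl (c', k', o')) c j] with m hm
      exact hm
    · refine Eventually.of_forall (fun j => mem_nnj.2 ⟨by simp [upt, uinf], fun c hc => ?_⟩)
      exact Eventually.of_forall (fun m => by simp [pt])
    · filter_upwards [eventually_ne_atTop j'] with j hj
      refine mem_nnj.2 ⟨by simpa [upt] using hj, fun c hc => ?_⟩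
      exact Eventually.of_forall (fun m => by simp [pt])
  · -- upt j
    refine mem_nnj.2 ⟨hba, fun c hc => ?_⟩
    filter_upwards [eventually_ne_pt_k a c j] with m hm
    exact hm

lemma t1_tXX : @T1Space XX tXX := @T1Space.mk XX tXX isClosed_singleton


/-! ### Closed basic neighborhoods and regularity -/

def tF (c k m : ℕ) : Set XX := {x | x = fpt c k ∨ ∃ j, m ≤ j ∧ x = pt c k j}
def tU (j : ℕ) (g : ℕ → ℕ) : Set XX :=
  {x | x = upt j ∨ ∃ c k, c ≤ j ∧ g c ≤ k ∧ x = pt c k j}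
def tI (N : ℕ) (G : ℕ → ℕ → ℕ) : Set XX :=
  {x | x = uinf ∨ ∃ j, N ≤ j ∧ x ∈ tU j (fun c => max (G j c) j)}

lemma isClosed_tF (c k m : ℕ) : IsClosed[tXX] (tF c k m) := by
  refine isClosed_tXX (fun b hb => ?_)
  rcases b with ⟨c', k', (_ | j')⟩ | (_ | j')
  · -- fpt c' k'
    refine mem_nn_fpt.2 ⟨hb, ?_⟩
    refine Eventually.of_forall (fun j hj => hb ?_)
    rcases hj with hj | ⟨j₀, hj₀, hj⟩
    · simp [pt, fpt] at hj
    · simp only [pt, Sum.inl.injEq, Prod.mk.injEq, Option.some.injEq] at hj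
      exact Or.inl (by simp [fpt, hj.1, hj.2.1])
  · exact hb
  · -- uinf
    refine mem_nn_uinf.2 ⟨hb, Eventually.of_forall (fun j => mem_nnj.2 ⟨?_, fun c' hc => ?_⟩)⟩
    · rintro (h | ⟨j₀, _, h⟩) <;> simp [upt, fpt, pt] at h
    · filter_upwards [eventually_ne_atTop k] with m' hm'
      rintro (h | ⟨j₀, _, h⟩)
      · simp [pt, fpt] at h
      · simp only [pt, Sum.inl.injEq, Prod.mk.injEq, Option.some.injEq] at h
        exact hm' h.2.1
  · -- upt j'
    refine mem_nnj.2 ⟨hb, fun c' hc => ?_⟩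
    filter_upwards [eventually_ne_atTop k] with m' hm'
    rintro (h | ⟨j₀, _, h⟩)
    · simp [pt, fpt] at h
    · simp only [pt, Sum.inl.injEq, Prod.mk.injEq, Option.some.injEq] at h
      exact hm' h.2.1

lemma isClosed_tU (j : ℕ) (g : ℕ → ℕ) : IsClosed[tXX] (tU j g) := by
  refine isClosed_tXX (fun b hb => ?_)
  rcases b with ⟨c', k', (_ | j')⟩ | (_ | j')
  · -- fpt c' k'
    refine mem_nn_fpt.2 ⟨hb, ?_⟩
    filter_upwards [eventually_ne_atTop j] with j'' hj''
    rintro (h | ⟨c₀, k₀, _, _, h⟩)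
    · simp [pt, upt] at h
    · simp only [pt, Sum.inl.injEq, Prod.mk.injEq, Option.some.injEq] at h
      exact hj'' h.2.2
  · exact hb
  · -- uinf
    refine mem_nn_uinf.2 ⟨hb, ?_⟩
    filter_upwards [eventually_ne_atTop j] with j'' hj''
    refine mem_nnj.2 ⟨?_, fun c' hc => Eventually.of_forall (fun m' => ?_)⟩
    · rintro (h | ⟨c₀, k₀, _, _, h⟩)
      · simp only [upt, Sum.inr.injEq, Option.some.injEq] at h
        exact hj'' h
      · simp [upt, pt] at h
    · rintro (h | ⟨c₀, k₀, _, _, h⟩)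
      · simp [pt, upt] at h
      · simp only [pt, Sum.inl.injEq, Prod.mk.injEq, Option.some.injEq] at h
        exact hj'' h.2.2
  · -- upt j'
    have hj' : j' ≠ j := fun h => hb (Or.inl (by rw [h]; rfl))
    refine mem_nnj.2 ⟨hb, fun c' hc => Eventually.of_forall (fun m' => ?_)⟩
    rintro (h | ⟨c₀, k₀, _, _, h⟩)
    · simp [pt, upt] at h
    · simp only [pt, Sum.inl.injEq, Prod.mk.injEq, Option.some.injEq] at h
      exact hj' h.2.2

lemma isClosed_tI (N : ℕ) (G : ℕ → ℕ → ℕ) : IsClosed[tXX] (tI N G) := by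
  refine isClosed_tXX (fun b hb => ?_)
  rcases b with ⟨c', k', (_ | j')⟩ | (_ | j')
  · -- fpt c' k'
    refine mem_nn_fpt.2 ⟨hb, ?_⟩
    filter_upwards [eventually_gt_atTop k'] with j hj
    rintro (h | ⟨j₀, hj₀, (h | ⟨c₀, k₀, hc₀, hk₀, h⟩)⟩)
    · simp [pt, uinf] at h
    · simp [pt, upt] at h
    · simp only [pt, Sum.inl.injEq, Prod.mk.injEq, Option.some.injEq] at h
      obtain ⟨rfl, rfl, rfl⟩ := h
      exact absurd (le_trans (le_max_right _ _) hk₀) (not_le.2 hj)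
  · exact hb
  · -- uinf
    exact absurd (Or.inl rfl) hb
  · -- upt j'
    have hj' : ¬ N ≤ j' := fun h => hb (Or.inr ⟨j', h, Or.inl rfl⟩)
    refine mem_nnj.2 ⟨hb, fun c' hc => Eventually.of_forall (fun m' => ?_)⟩
    rintro (h | ⟨j₀, hj₀, (h | ⟨c₀, k₀, hc₀, hk₀, h⟩)⟩)
    · simp [pt, uinf] at h
    · simp [pt, upt] at h
    · simp only [pt, Sum.inl.injEq, Prod.mk.injEq, Option.some.injEq] at h
      exact hj' (h.2.2 ▸ hj₀)

lemma regular_tXX : @RegularSpace XX tXX := by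
  letI := tXX
  refine RegularSpace.of_exists_mem_nhds_isClosed_subset ?_
  intro a s hs
  rw [nhds_eq] at hs
  rcases a with ⟨c, k, (_ | j)⟩ | (_ | j)
  · -- fpt c k
    obtain ⟨h1, h2⟩ := mem_nn_fpt.1 hs
    obtain ⟨m, hm⟩ := eventually_atTop.1 h2
    refine ⟨tF c k m, ?_, isClosed_tF c k m, ?_⟩
    · rw [nhds_eq]
      refine mem_nn_fpt.2 ⟨Or.inl rfl, eventually_atTop.2 ⟨m, fun j hj => Or.inr ⟨j, hj, rfl⟩⟩⟩
    · rintro x (rfl | ⟨j, hj, rfl⟩)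
      · exact h1
      · exact hm j hj
  · -- isolated point
    refine ⟨{Sum.inl (c, k, some j)}, ?_, isClosed_singleton _, ?_⟩
    · rw [nhds_eq]; exact rfl
    · simpa using mem_of_mem_nhds (by rw [nhds_eq]; exact hs : s ∈ @nhds XX tXX _)
  · -- uinf
    obtain ⟨h1, h2⟩ := mem_nn_uinf.1 hs
    obtain ⟨N, hN⟩ := eventually_atTop.1 h2
    have hch : ∀ j c : ℕ, ∃ m, N ≤ j → c ≤ j → ∀ k ≥ m, pt c k j ∈ s := by
      intro j c
      by_cases hj : N ≤ j
      · by_cases hc : c ≤ j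
        · obtain ⟨m, hm⟩ := eventually_atTop.1 ((mem_nnj.1 (hN j hj)).2 c hc)
          exact ⟨m, fun _ _ => hm⟩
        · exact ⟨0, fun _ h => absurd h hc⟩
      · exact ⟨0, fun h => absurd h hj⟩
    choose G hG using hch
    refine ⟨tI N G, ?_, isClosed_tI N G, ?_⟩
    · rw [nhds_eq]
      refine mem_nn_uinf.2 ⟨Or.inl rfl, eventually_atTop.2 ⟨N, fun j hj => mem_nnj.2
        ⟨Or.inr ⟨j, hj, Or.inl rfl⟩, fun c hc => eventually_atTop.2
          ⟨max (G j c) j, fun k hk => Or.inr ⟨j, hj, Or.inr ⟨c, k, hc, hk, rfl⟩⟩⟩⟩⟩⟩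
    · rintro x (rfl | ⟨j, hj, (rfl | ⟨c, k, hc, hk, rfl⟩)⟩)
      · exact h1
      · exact (mem_nnj.1 (hN j hj)).1
      · exact hG j c hj hc k (le_trans (le_max_left _ _) hk)
  · -- upt j
    obtain ⟨h1, h2⟩ := mem_nnj.1 hs
    have hch : ∀ c : ℕ, ∃ m, c ≤ j → ∀ k ≥ m, pt c k j ∈ s := by
      intro c
      by_cases hc : c ≤ j
      · obtain ⟨m, hm⟩ := eventually_atTop.1 (h2 c hc)
        exact ⟨m, fun _ => hm⟩
      · exact ⟨0, fun h => absurd h hc⟩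
    choose g hg using hch
    refine ⟨tU j g, ?_, isClosed_tU j g, ?_⟩
    · rw [nhds_eq]
      refine mem_nnj.2 ⟨Or.inl rfl, fun c hc => eventually_atTop.2
        ⟨g c, fun k hk => Or.inr ⟨c, k, hc, hk, rfl⟩⟩⟩
    · rintro x (rfl | ⟨c, k, hc, hk, rfl⟩)
      · exact h1
      · exact hg c hc k hk


/-! ### The map and compactness of fibers -/

def ff : XX → Option (ℕ × ℕ)
  | Sum.inl (c, k, _) => some (c, k)
  | Sum.inr _ => none

lemma ff_pt (c k j : ℕ) : ff (pt c k j) = some (c, k) := rfl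
lemma ff_fpt (c k : ℕ) : ff (fpt c k) = some (c, k) := rfl

/-- An auxiliary compactness criterion for "convergent sequences". -/
lemma isCompact_range_aux (e : Option ℕ → XX)
    (h : ∀ A ∈ nn (e none), ∃ m, ∀ j, m ≤ j → e (some j) ∈ A) :
    @IsCompact XX tXX (Set.range e) := by
  letI := tXX
  rw [isCompact_iff_ultrafilter_le_nhds]
  intro F hF
  rw [le_principal_iff] at hF
  by_cases hsing : ∃ o : Option ℕ, {e o} ∈ F
  · obtain ⟨o, ho⟩ := hsing
    refine ⟨e o, Set.mem_range_self o, fun A hA => ?_⟩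
    exact Filter.mem_of_superset ho (Set.singleton_subset_iff.2 (mem_of_mem_nhds hA))
  · push_neg at hsing
    refine ⟨e none, Set.mem_range_self none, fun A hA => ?_⟩
    rw [nhds_eq] at hA
    obtain ⟨m, hm⟩ := h A hA
    have hfin : (Set.range e \ A).Finite := by
      refine Set.Finite.subset (Set.finite_range (fun i : Fin m => e (some i))) ?_
      rintro x ⟨⟨o, rfl⟩, hx⟩
      rcases o with _ | j
      · exact absurd (mem_of_mem_nhds (show A ∈ @nhds XX tXX (e none) by rw [nhds_eq]; exact hA)) hx
      · have hj : j < m := by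
          by_contra hj
          exact hx (hm j (le_of_not_gt hj))
        exact ⟨⟨j, hj⟩, rfl⟩
    have hnot : (Set.range e \ A) ∉ F := by
      intro hmem
      obtain ⟨x, hx, hpure⟩ := F.eq_pure_of_finite_mem hfin hmem
      obtain ⟨o, rfl⟩ := hx.1
      exact hsing o (by rw [hpure]; exact rfl)
    have hc : (Set.range e \ A)ᶜ ∈ F := (Ultrafilter.compl_mem_iff_notMem).2 hnot
    refine Filter.mem_of_superset (Filter.inter_mem hF hc) ?_
    rintro x ⟨hx1, hx2⟩
    by_contra hxA
    exact hx2 ⟨hx1, hxA⟩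

lemma fiber_some (c k : ℕ) : ff ⁻¹' {some (c, k)} = Set.range (fun o => Sum.inl (c, k, o)) := by
  ext x
  rcases x with ⟨c', k', o'⟩ | o'
  · simp only [Set.mem_preimage, Set.mem_singleton_iff, Set.mem_range]
    constructor
    · intro h
      have h2 : c' = c ∧ k' = k := by simpa [ff, Prod.ext_iff] using h
      exact ⟨o', by simp [h2.1, h2.2]⟩
    · rintro ⟨o, ho⟩
      simp only [Sum.inl.injEq, Prod.mk.injEq] at ho
      simp [ff, ho.1, ho.2.1]
  · simp [ff]

lemma fiber_none : ff ⁻¹' {none} = Set.range (Sum.inr : Option ℕ → XX) := by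
  ext x
  rcases x with ⟨c', k', o'⟩ | o' <;> simp [ff]

lemma isCompact_fibers (y : Option (ℕ × ℕ)) : @IsCompact XX tXX (ff ⁻¹' {y}) := by
  rcases y with _ | ⟨c, k⟩
  · rw [fiber_none]
    refine isCompact_range_aux _ (fun A hA => ?_)
    obtain ⟨h1, h2⟩ := mem_nn_uinf.1 hA
    obtain ⟨m, hm⟩ := eventually_atTop.1 h2
    exact ⟨m, fun j hj => (mem_nnj.1 (hm j hj)).1⟩
  · rw [fiber_some]
    refine isCompact_range_aux _ (fun A hA => ?_)
    obtain ⟨h1, h2⟩ := mem_nn_fpt.1 hA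
    obtain ⟨m, hm⟩ := eventually_atTop.1 h2
    exact ⟨m, hm⟩


/-! ### Continuity and surjectivity of `ff` -/

lemma continuous_ff : @Continuous XX _ tXX fanTopology ff := by
  rw [fanTopology, continuous_generateFrom_iff]
  rintro s (⟨a, rfl⟩ | ⟨g, rfl⟩)
  · -- preimage of {some a}
    rw [isOpen_tXX]
    intro x hx
    rcases x with ⟨c, k, (_ | j)⟩ | o
    · -- fpt
      refine mem_nn_fpt.2 ⟨hx, Eventually.of_forall (fun j => ?_)⟩
      exact hx
    · exact hx
    · simp only [Set.mem_preimage, Set.mem_singleton_iff] at hx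
      exact absurd hx (by simp [ff])
  · -- preimage of insert none (some '' L g)
    rw [isOpen_tXX]
    intro x hx
    have hnone : ∀ o : Option ℕ, (Sum.inr o : XX) ∈ ff ⁻¹' insert none (Option.some '' L g) := by
      intro o; simp [ff]
    rcases x with ⟨c, k, (_ | j)⟩ | (_ | j)
    · -- fpt
      refine mem_nn_fpt.2 ⟨hx, Eventually.of_forall (fun j => ?_)⟩
      simp only [Set.mem_preimage, ff_fpt] at hx
      exact hx
    · exact hx
    · -- uinf
      refine mem_nn_uinf.2 ⟨hx, Eventually.of_forall (fun j => mem_nnj.2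
        ⟨hnone _, fun c hc => ?_⟩)⟩
      filter_upwards [eventually_ge_atTop (g c)] with k hk
      simp only [Set.mem_preimage, ff_pt]
      exact Set.mem_insert_of_mem _ ⟨(c, k), hk, rfl⟩
    · -- upt j
      refine mem_nnj.2 ⟨hnone _, fun c hc => ?_⟩
      filter_upwards [eventually_ge_atTop (g c)] with k hk
      simp only [Set.mem_preimage, ff_pt]
      exact Set.mem_insert_of_mem _ ⟨(c, k), hk, rfl⟩

lemma surjective_ff : Function.Surjective ff := by
  rintro (_ | ⟨c, k⟩)
  · exact ⟨uinf, rfl⟩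
  · exact ⟨pt c k 0, rfl⟩

/-! ### Convergence in the fan -/

lemma fan_tendsto_iff {p : ℕ → Option (ℕ × ℕ)} :
    Tendsto p atTop (@nhds _ fanTopology none) ↔
      ∀ g : ℕ → ℕ, ∀ᶠ n in atTop, p n ∈ insert none (Option.some '' L g) := by
  rw [fanTopology, TopologicalSpace.tendsto_nhds_generateFrom_iff]
  constructor
  · intro h g
    exact h _ (Or.inr ⟨g, rfl⟩) (Set.mem_insert _ _)
  · rintro h s (⟨a, rfl⟩ | ⟨g, rfl⟩) hnone
    · simp at hnone
    · exact h g

lemma fan_tendsto_column (c0 : ℕ) :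
    Tendsto (fun n => (some (c0, n) : Option (ℕ × ℕ))) atTop (@nhds _ fanTopology none) := by
  rw [fan_tendsto_iff]
  intro g
  filter_upwards [eventually_ge_atTop (g c0)] with n hn
  exact Set.mem_insert_of_mem _ ⟨(c0, n), hn, rfl⟩

lemma fan_nontrivial_column (c0 : ℕ) :
    @NontrivialConvTo _ fanTopology (fun n => (some (c0, n) : Option (ℕ × ℕ))) none := by
  refine ⟨fan_tendsto_column c0, ?_⟩
  rintro ⟨N, hN⟩
  have := hN (N + 1) (by omega)
  simp at this


/-! ### Sequence covering -/

lemma fan_eventually_const {p : ℕ → Option (ℕ × ℕ)} {a : ℕ × ℕ}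
    (hp : Tendsto p atTop (@nhds _ fanTopology (some a))) : ∃ N, ∀ n ≥ N, p n = some a := by
  rw [fanTopology, TopologicalSpace.tendsto_nhds_generateFrom_iff] at hp
  have := hp {some a} (Or.inl ⟨a, rfl⟩) rfl
  rw [mem_atTop_sets] at this
  obtain ⟨N, hN⟩ := this
  exact ⟨N, fun n hn => hN n hn⟩

lemma column_bound {p : ℕ → Option (ℕ × ℕ)}
    (hp : Tendsto p atTop (@nhds _ fanTopology none)) :
    ∃ M, ∀ᶠ n in atTop, ∀ a : ℕ × ℕ, p n = some a → a.1 ≤ M := by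
  by_contra hM
  push_neg at hM
  have hM' : ∀ M : ℕ, ∃ᶠ n in atTop, ∃ a : ℕ × ℕ, p n = some a ∧ M < a.1 := by
    intro M
    have := hM M
    exact this
  have H : ∀ M N : ℕ, ∃ na : ℕ × (ℕ × ℕ), N ≤ na.1 ∧ p na.1 = some na.2 ∧ M < na.2.1 := by
    intro M N
    obtain ⟨n, hn, a, ha1, ha2⟩ := frequently_atTop.1 (hM' M) N
    exact ⟨⟨n, a⟩, hn, ha1, ha2⟩
  choose F hF1 hF2 hF3 using H
  set sq : ℕ → ℕ × (ℕ × ℕ) :=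
    fun i => Nat.rec (F 0 0) (fun _ prev => F prev.2.1 (prev.1 + 1)) i with hsq
  have hsq_succ : ∀ i, sq (i + 1) = F (sq i).2.1 ((sq i).1 + 1) := fun i => rfl
  have hsq_p : ∀ i, p (sq i).1 = some (sq i).2 := by
    intro i
    cases i with
    | zero => exact hF2 0 0
    | succ i => rw [hsq_succ]; exact hF2 _ _
  have hcol_mono : StrictMono (fun i => (sq i).2.1) := by
    refine strictMono_nat_of_lt_succ (fun i => ?_)
    rw [hsq_succ]
    exact hF3 _ _
  have hn_mono : StrictMono (fun i => (sq i).1) := by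
    refine strictMono_nat_of_lt_succ (fun i => ?_)
    have := hF1 (sq i).2.1 ((sq i).1 + 1)
    rw [← hsq_succ] at this
    omega
  set g : ℕ → ℕ :=
    fun c => 1 + Finset.sup (Finset.range (c + 1))
      (fun i => if (sq i).2.1 = c then (sq i).2.2 else 0) with hgdef
  have hg : ∀ i, ¬ (g (sq i).2.1 ≤ (sq i).2.2) := by
    intro i
    have hmem : i ∈ Finset.range ((sq i).2.1 + 1) :=
      Finset.mem_range.2 (Nat.lt_succ_of_le (hcol_mono.le_apply))
    have h1 := Finset.le_sup (f := fun i' => if (sq i').2.1 = (sq i).2.1 then (sq i').2.2 else 0) hmem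
    simp only [eq_self_iff_true, if_true] at h1
    have hgi : g (sq i).2.1 = 1 + Finset.sup (Finset.range ((sq i).2.1 + 1))
        (fun i' => if (sq i').2.1 = (sq i).2.1 then (sq i').2.2 else 0) := rfl
    rw [hgi]
    omega
  obtain ⟨N, hN⟩ := eventually_atTop.1 ((fan_tendsto_iff).1 hp g)
  have hmem := hN (sq N).1 (le_trans hn_mono.le_apply le_rfl)
  rw [hsq_p N] at hmem
  rcases hmem with hmem | ⟨b, hb, hbe⟩
  · simp at hmem
  · rw [Option.some.injEq] at hbe
    rw [hbe] at hb
    exact hg N hb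

lemma seq_covering (p : ℕ → Option (ℕ × ℕ)) (y : Option (ℕ × ℕ))
    (h : @NontrivialConvTo _ fanTopology p y) :
    ∃ (q : ℕ → XX) (x : XX),
      Tendsto q atTop (@nhds XX tXX x) ∧ ∀ n, ff (q n) = p n := by
  obtain ⟨hp, hnt⟩ := h
  rcases y with _ | a
  · -- y = none
    obtain ⟨M, hM⟩ := column_bound hp
    refine ⟨fun n => (p n).elim (upt M) (fun a => pt a.1 a.2 M), upt M, ?_, ?_⟩
    · rw [show @nhds XX tXX (upt M) = nn (upt M) from nhds_eq _, tendsto_def]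
      intro A hA
      obtain ⟨h1, h2⟩ := mem_nnj.1 hA
      have hch : ∀ c : ℕ, ∃ m, c ≤ M → ∀ k ≥ m, pt c k M ∈ A := by
        intro c
        by_cases hc : c ≤ M
        · obtain ⟨m, hm⟩ := eventually_atTop.1 (h2 c hc)
          exact ⟨m, fun _ => hm⟩
        · exact ⟨0, fun hcon => absurd hcon hc⟩
      choose g hg using hch
      filter_upwards [hM, (fan_tendsto_iff).1 hp g] with n hcol hmem
      rcases hpn : p n with _ | a
      · simpa [hpn] using h1
      · rw [hpn] at hmem
        rcases hmem with hmem | ⟨b, hb, hbe⟩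
        · simp at hmem
        · rw [Option.some.injEq] at hbe
          rw [hbe] at hb
          simp only [Set.mem_preimage, hpn, Option.elim]
          exact hg a.1 (hcol a hpn) a.2 hb
    · intro n
      rcases hpn : p n with _ | a <;> simp [hpn, ff, pt, upt]
  · -- y = some a : contradiction with nontriviality
    obtain ⟨N, hN⟩ := fan_eventually_const hp
    exact absurd ⟨N, fun n hn => (hN n hn).trans (hN N le_rfl).symm⟩ hnt


/-! ### Not 1-sequence-covering -/

lemma not_one_seq_covering :
    ¬ (∀ y, ∃ x : XX, ff x = y ∧
        ∀ p : ℕ → Option (ℕ × ℕ), @NontrivialConvTo _ fanTopology p y →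
          ∃ q : ℕ → XX, Tendsto q atTop (@nhds XX tXX x) ∧ ∀ n, ff (q n) = p n) := by
  intro h
  obtain ⟨x, hx, hlift⟩ := h none
  -- `x` lies in the fiber over `none`
  obtain ⟨o, rfl⟩ : ∃ o : Option ℕ, x = Sum.inr o := by
    rcases x with ⟨c, k, o'⟩ | o
    · exact absurd hx (by simp [ff])
    · exact ⟨o, rfl⟩
  rcases o with _ | j
  · -- x = uinf : use the sequence in column 0
    obtain ⟨q, hq, hfq⟩ := hlift _ (fan_nontrivial_column 0)
    rw [show @nhds XX tXX (Sum.inr none) = nn uinf from nhds_eq _] at hq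
    -- every term of the lift has the form `Sum.inl (0, n, o)`
    have hform : ∀ n, ∃ o : Option ℕ, q n = Sum.inl (0, n, o) := by
      intro n
      have := hfq n
      rcases hqn : q n with ⟨c, k, o'⟩ | o'
      · rw [hqn] at this
        have h2 : c = 0 ∧ k = n := by simpa [ff, Prod.ext_iff] using this
        exact ⟨o', by rw [h2.1, h2.2]⟩
      · rw [hqn] at this
        exact absurd this (by simp [ff])
    -- the layers of the lift tend to infinity
    have hlayer : ∀ J : ℕ, ∀ᶠ n in atTop, ∀ o : Option ℕ,
        q n = Sum.inl (0, n, o) → ∃ j', J < j' ∧ o = some j' := by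
      intro J
      have hA : {x : XX | (∃ o : Option ℕ, x = Sum.inr o) ∨
          ∃ c k j', J < j' ∧ x = pt c k j'} ∈ nn uinf := by
        refine mem_nn_uinf.2 ⟨Or.inl ⟨none, rfl⟩, ?_⟩
        filter_upwards [eventually_gt_atTop J] with j hj
        refine mem_nnj.2 ⟨Or.inl ⟨some j, rfl⟩, fun c hc => ?_⟩
        exact Eventually.of_forall (fun k => Or.inr ⟨c, k, j, hj, rfl⟩)
      have hev : ∀ᶠ n in atTop, q n ∈ {x : XX | (∃ o : Option ℕ, x = Sum.inr o) ∨
          ∃ c k j', J < j' ∧ x = pt c k j'} := hq hA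
      filter_upwards [hev] with n hn o ho
      rw [ho] at hn
      rcases hn with ⟨o', ho'⟩ | ⟨c, k, j', hj', he⟩
      · simp at ho'
      · simp only [pt, Sum.inl.injEq, Prod.mk.injEq] at he
        exact ⟨j', hj', he.2.2⟩
    -- choose thresholds
    have hch : ∀ j : ℕ, ∃ N, ∀ n ≥ N, ∀ o : Option ℕ,
        q n = Sum.inl (0, n, o) → o ≠ some j := by
      intro j
      obtain ⟨N, hN⟩ := eventually_atTop.1 (hlayer j)
      refine ⟨N, fun n hn o ho hoj => ?_⟩
      obtain ⟨j', hj', he⟩ := hN n hn o ho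
      rw [hoj] at he
      rw [Option.some.injEq] at he
      omega
    choose hthr hthr_spec using hch
    have hA2 : {x : XX | (∃ o : Option ℕ, x = Sum.inr o) ∨
        ∃ c k j', hthr j' ≤ k ∧ x = pt c k j'} ∈ nn uinf := by
      refine mem_nn_uinf.2 ⟨Or.inl ⟨none, rfl⟩, Eventually.of_forall (fun j => ?_)⟩
      refine mem_nnj.2 ⟨Or.inl ⟨some j, rfl⟩, fun c hc => ?_⟩
      filter_upwards [eventually_ge_atTop (hthr j)] with k hk
      exact Or.inr ⟨c, k, j, hk, rfl⟩
    have hev2 : ∀ᶠ n in atTop, q n ∈ {x : XX | (∃ o : Option ℕ, x = Sum.inr o) ∨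
        ∃ c k j', hthr j' ≤ k ∧ x = pt c k j'} := hq hA2
    obtain ⟨n, hn⟩ := hev2.exists
    obtain ⟨o, ho⟩ := hform n
    rw [ho] at hn
    rcases hn with ⟨o', ho'⟩ | ⟨c, k, j', hj', he⟩
    · simp at ho'
    · simp only [pt, Sum.inl.injEq, Prod.mk.injEq] at he
      obtain ⟨rfl, hk, rfl⟩ := he
      exact hthr_spec j' n (hk ▸ hj') _ ho rfl
  · -- x = upt j : use the sequence in column j+1
    obtain ⟨q, hq, hfq⟩ := hlift _ (fan_nontrivial_column (j + 1))
    rw [show @nhds XX tXX (Sum.inr (some j)) = nn (upt j) from nhds_eq _] at hq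
    have hA : {x : XX | x = upt j ∨ ∃ c k, c ≤ j ∧ x = pt c k j} ∈ nn (upt j) := by
      rw [nn_upt]
      refine mem_nnj.2 ⟨Or.inl rfl, fun c hc => ?_⟩
      exact Eventually.of_forall (fun k => Or.inr ⟨c, k, hc, rfl⟩)
    have hev : ∀ᶠ n in atTop, q n ∈ {x : XX | x = upt j ∨ ∃ c k, c ≤ j ∧ x = pt c k j} := hq hA
    obtain ⟨n, hn⟩ := hev.exists
    have hffn := hfq n
    rcases hn with hn | ⟨c, k, hc, he⟩
    · rw [hn] at hffn
      exact absurd hffn (by simp [ff, upt])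
    · rw [he] at hffn
      have hcj : c = j + 1 ∧ k = n := by simpa [ff_pt, Prod.ext_iff] using hffn
      omega


/-! ### Submetrizability -/

noncomputable def phi : XX → ℝ × ℝ
  | Sum.inl (c, k, some j) => ((1/2 : ℝ)^j, (1/2 : ℝ)^(Nat.pair c k))
  | Sum.inl (c, k, none) => (0, (1/2 : ℝ)^(Nat.pair c k))
  | Sum.inr (some j) => ((1/2 : ℝ)^j, 0)
  | Sum.inr none => (0, 0)

lemma half_anti : StrictAnti (fun n : ℕ => ((1/2 : ℝ))^n) :=
  fun _ _ h => pow_lt_pow_right_of_lt_one₀ (by norm_num) (by norm_num) h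

lemma half_pos' (n : ℕ) : (0:ℝ) < (1/2 : ℝ)^n := pow_pos (by norm_num) n

lemma phi_inj : Function.Injective phi := by
  have hinj := half_anti.injective
  intro x y h
  rcases x with ⟨c, k, (_ | j)⟩ | (_ | j) <;> rcases y with ⟨c', k', (_ | j')⟩ | (_ | j') <;>
    simp only [phi, Prod.mk.injEq] at h ⊢ <;>
    first
      | rfl
      | (exact absurd h (half_pos' _).ne)
      | (exact absurd h.symm (half_pos' _).ne)
      | (exact absurd h (half_pos' _).ne')
      | (exact absurd h.symm (half_pos' _).ne')
      | (exact absurd h.1 (half_pos' _).ne)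
      | (exact absurd h.1.symm (half_pos' _).ne)
      | (exact absurd h.1 (half_pos' _).ne')
      | (exact absurd h.1.symm (half_pos' _).ne')
      | (exact absurd h.2 (half_pos' _).ne)
      | (exact absurd h.2.symm (half_pos' _).ne)
      | (exact absurd h.2 (half_pos' _).ne')
      | (exact absurd h.2.symm (half_pos' _).ne')
      | (obtain ⟨rfl, rfl⟩ := Nat.pair_eq_pair.1 (hinj h.2);
         first
           | rfl
           | (obtain rfl := hinj h.1; rfl))
      | (obtain ⟨rfl, rfl⟩ := Nat.pair_eq_pair.1 (hinj h); rfl)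
      | (obtain rfl := hinj h.1; rfl)
      | (obtain rfl := hinj h; rfl)

lemma tendsto_pair_atTop (c : ℕ) : Tendsto (Nat.pair c) atTop atTop := by
  refine tendsto_atTop_mono' atTop ?_ tendsto_id
  filter_upwards [eventually_gt_atTop c] with k hk
  show (id k : ℕ) ≤ Nat.pair c k
  rw [Nat.pair, if_pos hk]
  have h1 : k ≤ k * k := Nat.le_mul_of_pos_left k (by omega)
  simp only [id]
  omega

lemma tendsto_half_pair (c : ℕ) :
    Tendsto (fun k => ((1/2 : ℝ))^(Nat.pair c k)) atTop (𝓝 0) :=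
  (tendsto_pow_atTop_nhds_zero_of_lt_one (by norm_num) (by norm_num)).comp
    (tendsto_pair_atTop c)

lemma tendsto_half : Tendsto (fun n : ℕ => ((1/2 : ℝ))^n) atTop (𝓝 0) :=
  tendsto_pow_atTop_nhds_zero_of_lt_one (by norm_num) (by norm_num)

lemma continuous_phi : @Continuous XX (ℝ × ℝ) tXX _ phi := by
  rw [@continuous_iff_continuousAt XX (ℝ × ℝ) tXX _ phi]
  intro x
  show Tendsto phi (@nhds XX tXX x) (𝓝 (phi x))
  rw [nhds_eq]
  rcases x with ⟨c, k, (_ | j)⟩ | (_ | j)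
  · -- fpt c k
    show Tendsto phi (nn (fpt c k)) (𝓝 (phi (fpt c k)))
    rw [nn_fpt, Tendsto, Filter.map_sup, sup_le_iff]
    constructor
    · exact tendsto_pure_nhds phi _
    · rw [Filter.map_map]
      show Tendsto (fun j => phi (pt c k j)) atTop (𝓝 (phi (fpt c k)))
      have : (fun j => phi (pt c k j)) =
          fun j => (((1/2 : ℝ))^j, ((1/2 : ℝ))^(Nat.pair c k)) := rfl
      rw [this]
      exact Tendsto.prodMk_nhds tendsto_half tendsto_const_nhds
  · exact tendsto_pure_nhds phi _
  · -- uinf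
    show Tendsto phi (nn uinf) (𝓝 (phi uinf))
    rw [nn_uinf, Tendsto, Filter.map_sup, sup_le_iff]
    refine ⟨tendsto_pure_nhds phi _, ?_⟩
    intro s hs
    rw [Filter.mem_map, Filter.mem_bind']
    obtain ⟨ε, hε, hball⟩ := Metric.mem_nhds_iff.1 (show s ∈ 𝓝 (phi uinf) from hs)
    have hev := tendsto_half.eventually_lt_const hε
    filter_upwards [hev] with j hj
    refine mem_nnj.2 ⟨?_, fun c hc => ?_⟩
    · refine hball ?_
      show phi (upt j) ∈ Metric.ball (phi uinf) ε
      rw [Metric.mem_ball]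
      show dist (((1/2 : ℝ))^j, (0:ℝ)) ((0:ℝ), (0:ℝ)) < ε
      rw [Prod.dist_eq]
      simp only [Real.dist_eq, sub_zero]
      rw [abs_of_pos (half_pos' j)]
      simp only [abs_zero]
      rw [max_eq_left (half_pos' j).le]
      exact hj
    · have hev2 := (tendsto_half_pair c).eventually_lt_const hε
      filter_upwards [hev2] with m hm
      refine hball ?_
      show phi (pt c m j) ∈ Metric.ball (phi uinf) ε
      rw [Metric.mem_ball]
      show dist (((1/2 : ℝ))^j, ((1/2 : ℝ))^(Nat.pair c m)) ((0:ℝ), (0:ℝ)) < ε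
      rw [Prod.dist_eq]
      simp only [Real.dist_eq, sub_zero]
      rw [abs_of_pos (half_pos' j), abs_of_pos (half_pos' _)]
      exact max_lt hj hm
  · -- upt j
    show Tendsto phi (nn (upt j)) (𝓝 (phi (upt j)))
    rw [nn_upt, nnj, Tendsto, Filter.map_sup, sup_le_iff]
    refine ⟨tendsto_pure_nhds phi _, ?_⟩
    rw [Filter.map_iSup, iSup_le_iff]
    intro c
    rw [Filter.map_iSup, iSup_le_iff]
    intro hc
    rw [Filter.map_map]
    show Tendsto (fun m => phi (pt c m j)) atTop (𝓝 (phi (upt j)))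
    have : (fun m => phi (pt c m j)) =
        fun m => (((1/2 : ℝ))^j, ((1/2 : ℝ))^(Nat.pair c m)) := rfl
    rw [this]
    exact Tendsto.prodMk_nhds tendsto_const_nhds (tendsto_half_pair c)

noncomputable def sigmaTop : TopologicalSpace XX :=
  TopologicalSpace.induced phi inferInstance

lemma tXX_le_sigma : tXX ≤ sigmaTop :=
  (@continuous_iff_le_induced XX (ℝ × ℝ) phi tXX _).1 continuous_phi

lemma metrizable_sigma : @TopologicalSpace.MetrizableSpace XX sigmaTop := by
  letI := sigmaTop
  have hemb : @Topology.IsEmbedding XX (ℝ × ℝ) sigmaTop _ phi :=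
    Function.Injective.isEmbedding_induced phi_inj
  exact hemb.metrizableSpace

end FanEx

/-- There exist a countable submetrizable T1 regular space `X` and a continuous
surjection `f : X → S_ω` with compact fibers which is sequence-covering but not
1-sequence-covering. -/
theorem exists_compact_seqCovering_not_one_seqCovering :
    ∃ (X : Type) (tX : TopologicalSpace X),
      Countable X ∧
      (∃ σ : TopologicalSpace X, tX ≤ σ ∧ @TopologicalSpace.MetrizableSpace X σ) ∧
      @T1Space X tX ∧ @RegularSpace X tX ∧
      ∃ f : X → Option (ℕ × ℕ),
        @Continuous X _ tX fanTopology f ∧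
        Function.Surjective f ∧
        (∀ y, @IsCompact X tX (f ⁻¹' {y})) ∧
        (∀ (p : ℕ → Option (ℕ × ℕ)) (y : Option (ℕ × ℕ)),
          @NontrivialConvTo _ fanTopology p y →
          ∃ (q : ℕ → X) (x : X),
            @Tendsto ℕ X q atTop (@nhds X tX x) ∧ ∀ n, f (q n) = p n) ∧
        ¬ (∀ y, ∃ x : X, f x = y ∧
            ∀ p : ℕ → Option (ℕ × ℕ), @NontrivialConvTo _ fanTopology p y →
              ∃ q : ℕ → X, @Tendsto ℕ X q atTop (@nhds X tX x) ∧ ∀ n, f (q n) = p n) :=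
  ⟨FanEx.XX, FanEx.tXX, inferInstance,
    ⟨FanEx.sigmaTop, FanEx.tXX_le_sigma, FanEx.metrizable_sigma⟩,
    FanEx.t1_tXX, FanEx.regular_tXX, FanEx.ff, FanEx.continuous_ff, FanEx.surjective_ff,
    FanEx.isCompact_fibers, FanEx.seq_covering, FanEx.not_one_seq_covering⟩
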